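/- arXiv:1601.02637 — 6 statements merged into one kernel-verified Lean document; each statement's English description precedes it below -/
import Mathlib

section
/- Let P_fwd be a probability density on ℝ bounded above by p_max > 0, and suppose Crooks' theorem holds: P_fwd(W) = e^{β(W−ΔF)} P_rev(−W) for a probability density P_rev, with β > 0. For w^δ ∈ ℝ define 1 − δ := ∫_{w^δ}^∞ P_rev(−W) dW. Then 1 − δ ≤ (p_max/β) e^{−β(w^δ − ΔF)}. -/
open MeasureTheory Real Set

lemma exp_neg_mul_integral (β c : ℝ) (hβ : 0 < β) :
    ∫ x in Ioi c, Real.exp (-(β * x)) = Real.exp (-(β * c)) / β := by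
  have := integral_comp_mul_left_Ioi (fun x => Real.exp (-x)) c hβ
  simp only [smul_eq_mul] at this
  rw [this, integral_exp_neg_Ioi]
  ring

/-- Tail-probability bound from Crooks' theorem and a bound on the forward density. -/
theorem tail_prob_bound
    (β ΔF pmax wδ : ℝ) (hβ : 0 < β) (hpmax : 0 < pmax)
    (Pfwd Prev : ℝ → ℝ)
    (hPf_nonneg : ∀ W, 0 ≤ Pfwd W)
    (hPr_nonneg : ∀ W, 0 ≤ Prev W)
    (hPf_norm : ∫ W, Pfwd W = 1)
    (hPr_norm : ∫ W, Prev W = 1)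
    (hPf_le : ∀ W, Pfwd W ≤ pmax)
    (hCrooks : ∀ W, Pfwd W = Real.exp (β * (W - ΔF)) * Prev (-W))
    (hInt : IntegrableOn (fun W => Prev (-W)) (Set.Ici wδ)) :
    ∫ W in Set.Ici wδ, Prev (-W) ≤ (pmax / β) * Real.exp (-(β * (wδ - ΔF))) := by
  have hrev : ∀ W, Prev (-W) = Real.exp (-(β * (W - ΔF))) * Pfwd W := by
    intro W
    rw [hCrooks W, ← mul_assoc, ← Real.exp_add]
    simp
  have hbound : ∀ W, Prev (-W) ≤ Real.exp (-(β * (W - ΔF))) * pmax := by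
    intro W
    rw [hrev W]
    exact mul_le_mul_of_nonneg_left (hPf_le W) (Real.exp_nonneg _)
  have hIntExp : IntegrableOn (fun W => Real.exp (-(β * (W - ΔF))) * pmax) (Ici wδ) := by
    have h1 : IntegrableOn (fun W => Real.exp (-β * W)) (Ioi wδ) :=
      exp_neg_integrableOn_Ioi wδ hβ
    have h2 : IntegrableOn (fun W => Real.exp (-(β * (W - ΔF))) * pmax) (Ioi wδ) := by
      have := (h1.const_mul (Real.exp (β * ΔF))).mul_const pmax
      refine IntegrableOn.congr_fun this (fun x _ => ?_) measurableSet_Ioi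
      rw [← Real.exp_add]
      ring_nf
    rwa [integrableOn_Ici_iff_integrableOn_Ioi]
  calc ∫ W in Set.Ici wδ, Prev (-W)
      ≤ ∫ W in Set.Ici wδ, Real.exp (-(β * (W - ΔF))) * pmax := by
        refine setIntegral_mono_on hInt hIntExp measurableSet_Ici (fun x _ => hbound x)
    _ = (pmax / β) * Real.exp (-(β * (wδ - ΔF))) := by
        rw [setIntegral_congr_set Ioi_ae_eq_Ici.symm]
        rw [integral_mul_const]
        have : (fun W => Real.exp (-(β * (W - ΔF)))) =
            fun W => Real.exp (β * ΔF) * Real.exp (-(β * W)) := by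
          funext W; rw [← Real.exp_add]; ring_nf
        rw [this, integral_const_mul, exp_neg_mul_integral β wδ hβ]
        rw [show -(β * (wδ - ΔF)) = β * ΔF + -(β * wδ) by ring, Real.exp_add]
        ring
end

section
/- Under the hypotheses of Crooks' theorem with P_fwd ≤ p_max and β > 0, with 1−δ := ∫_{w^δ}^∞ P_rev(−W) dW assumed positive, the expected number of reverse trials N_δ := 1/(1−δ) satisfies N_δ ≥ exp(β(w^δ − ΔF) + H), where H := −log(p_max/β) is the thermal order-∞ Rényi entropy of P_fwd. -/
open MeasureTheory Real Set

/-- Theorem 1: bound on the expected number of reverse trials,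
    with `H = -log (pmax/β)` the thermal order-∞ Rényi entropy. -/
theorem expected_trials_bound
    (β ΔF pmax wδ : ℝ) (hβ : 0 < β) (hpmax : 0 < pmax)
    (Pfwd Prev : ℝ → ℝ)
    (hPf_nonneg : ∀ W, 0 ≤ Pfwd W)
    (hPr_nonneg : ∀ W, 0 ≤ Prev W)
    (hPf_norm : ∫ W, Pfwd W = 1)
    (hPr_norm : ∫ W, Prev W = 1)
    (hPf_le : ∀ W, Pfwd W ≤ pmax)
    (hCrooks : ∀ W, Pfwd W = Real.exp (β * (W - ΔF)) * Prev (-W))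
    (hInt : IntegrableOn (fun W => Prev (-W)) (Set.Ici wδ))
    (oneMinusδ : ℝ)
    (hδdef : oneMinusδ = ∫ W in Set.Ici wδ, Prev (-W))
    (hδpos : 0 < oneMinusδ) :
    1 / oneMinusδ ≥ Real.exp (β * (wδ - ΔF) + (-Real.log (pmax / β))) := by
  set c : ℝ := pmax / β with hc
  have hcpos : 0 < c := div_pos hpmax hβ
  set a : ℝ := β * (wδ - ΔF) with ha
  -- integrability of the exponential bound
  have hInt2 : IntegrableOn (fun W => pmax * Real.exp (-(β * (W - ΔF)))) (Set.Ici wδ) := by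
    have h1 : IntegrableOn (fun W : ℝ => Real.exp (-β * W)) (Set.Ioi wδ) :=
      exp_neg_integrableOn_Ioi wδ hβ
    have h2 : IntegrableOn (fun W : ℝ => Real.exp (-β * W)) (Set.Ici wδ) :=
      (integrableOn_Ici_iff_integrableOn_Ioi (by simp)).2 h1
    refine IntegrableOn.congr_fun (h2.const_mul (pmax * Real.exp (β * ΔF)))
      (fun W _ => ?_) measurableSet_Ici
    show pmax * Real.exp (β * ΔF) * Real.exp (-β * W) = _
    rw [mul_assoc, ← Real.exp_add]
    ring_nf
  -- pointwise bound
  have hpt : ∀ W ∈ Set.Ici wδ, Prev (-W) ≤ pmax * Real.exp (-(β * (W - ΔF))) := by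
    intro W _
    have h := hCrooks W
    have hPrev : Prev (-W) = Real.exp (-(β * (W - ΔF))) * Pfwd W := by
      rw [h, Real.exp_neg]
      field_simp
    rw [hPrev, mul_comm]
    exact mul_le_mul_of_nonneg_right (hPf_le W) (le_of_lt (Real.exp_pos _))
  -- compute the integral of the bound
  have hkey : ∫ W in Set.Ici wδ, pmax * Real.exp (-(β * (W - ΔF))) = c * Real.exp (-a) := by
    rw [MeasureTheory.integral_Ici_eq_integral_Ioi]
    have hcomp := integral_comp_mul_left_Ioi (fun y => Real.exp (-y)) wδ hβ
    simp only [smul_eq_mul] at hcomp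
    have hbase : ∫ W in Set.Ioi wδ, Real.exp (-(β * W)) = β⁻¹ * Real.exp (-(β * wδ)) := by
      rw [hcomp, integral_exp_neg_Ioi]
    calc ∫ W in Set.Ioi wδ, pmax * Real.exp (-(β * (W - ΔF)))
        = ∫ W in Set.Ioi wδ, (pmax * Real.exp (β * ΔF)) * Real.exp (-(β * W)) := by
          congr 1; ext W; rw [mul_assoc, ← Real.exp_add]; ring_nf
      _ = (pmax * Real.exp (β * ΔF)) * ∫ W in Set.Ioi wδ, Real.exp (-(β * W)) :=
          integral_const_mul _ _
      _ = c * Real.exp (-a) := by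
          rw [hbase, hc, ha, show -(β * (wδ - ΔF)) = β * ΔF + -(β * wδ) by ring,
            Real.exp_add]
          field_simp
  have hb : oneMinusδ ≤ c * Real.exp (-a) := by
    rw [hδdef, ← hkey]
    exact setIntegral_mono_on hInt hInt2 measurableSet_Ici hpt
  have hrhs : Real.exp (a + (-Real.log c)) = 1 / (c * Real.exp (-a)) := by
    rw [Real.exp_add, Real.exp_neg a, Real.exp_neg (Real.log c), Real.exp_log hcpos]
    field_simp
  rw [ge_iff_le, hrhs]
  exact one_div_le_one_div_of_le hδpos hb
end

section
/- Under Crooks' theorem P_fwd(W) = e^{β(W−ΔF)} P_rev(−W) with β > 0 and P_rev(−W) ≤ q_max for all W, for W^ε ∈ ℝ with 1 − ε := ∫_{−∞}^{W^ε} P_fwd(W) dW > 0, the quantity N_ε := 1/(1−ε) satisfies N_ε ≥ exp(−β(W^ε − ΔF) + H_rev), where H_rev := −log(q_max/β). -/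
open MeasureTheory Real Set

lemma exp_mul_integrableOn_Iic' {β : ℝ} (hβ : 0 < β) (c : ℝ) :
    IntegrableOn (fun x => Real.exp (β * x)) (Set.Iic c) := by
  have h1 : IntegrableOn (fun x => Real.exp (-β * x)) (Ioi (-c)) :=
    exp_neg_integrableOn_Ioi _ hβ
  have h1' : IntegrableOn (fun x => Real.exp (-β * x)) (Ici (-c)) := by
    rwa [IntegrableOn, ← restrict_Ioi_eq_restrict_Ici]
  set e : ℝ ≃ᵐ ℝ := (Homeomorph.neg ℝ).toMeasurableEquiv with he
  have hpre : (e ⁻¹' Iic c) = Ici (-c) := by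
    ext x
    simp [he, Homeomorph.neg, neg_le]
  have hmap : (volume : Measure ℝ).restrict (Iic c)
      = Measure.map e ((volume : Measure ℝ).restrict (Ici (-c))) := by
    rw [← hpre, ← MeasurableEquiv.restrict_map]
    congr 1
    have : (⇑e) = fun x : ℝ => -x := rfl
    rw [this, Measure.map_neg_eq_self (volume : Measure ℝ)]
  rw [IntegrableOn, hmap, e.measurableEmbedding.integrable_map_iff]
  have hcomp : ((fun x => Real.exp (β * x)) ∘ ⇑e) = fun x => Real.exp (-β * x) := by
    funext x
    show Real.exp (β * (-x)) = Real.exp (-β * x)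
    congr 1
    ring
  rw [hcomp]
  exact h1'

lemma exp_mul_integral_Iic {β : ℝ} (hβ : 0 < β) (c : ℝ) :
    ∫ x in Set.Iic c, Real.exp (β * x) = Real.exp (β * c) / β := by
  have hderiv : ∀ x ∈ Iic c, HasDerivAt (fun y => Real.exp (β * y) / β)
      (Real.exp (β * x)) x := by
    intro x _
    have h1 : HasDerivAt (fun y : ℝ => β * y) β x := by
      simpa using (hasDerivAt_id x).const_mul β
    have h2 := (h1.exp).div_const β
    simpa [mul_div_cancel_right₀ _ hβ.ne'] using h2
  have htend : Filter.Tendsto (fun y => Real.exp (β * y) / β) Filter.atBot (nhds 0) := by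
    have h1 : Filter.Tendsto (fun y : ℝ => β * y) Filter.atBot Filter.atBot :=
      Filter.tendsto_id.const_mul_atBot hβ
    have := (Real.tendsto_exp_atBot.comp h1).div_const β
    simpa using this
  have := integral_Iic_of_hasDerivAt_of_tendsto' hderiv (exp_mul_integrableOn_Iic' hβ c) htend
  simpa using this

/-- Forward-protocol bound on the expected number of trials,
    with `H_rev = -log (qmax/β)`. -/
theorem forward_expected_trials_bound
    (β ΔF qmax Wε : ℝ) (hβ : 0 < β) (hqmax : 0 < qmax)
    (Pfwd Prev : ℝ → ℝ)
    (hPf_nonneg : ∀ W, 0 ≤ Pfwd W)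
    (hPr_nonneg : ∀ W, 0 ≤ Prev W)
    (hPf_norm : ∫ W, Pfwd W = 1)
    (hPr_norm : ∫ W, Prev W = 1)
    (hPr_le : ∀ W, Prev (-W) ≤ qmax)
    (hCrooks : ∀ W, Pfwd W = Real.exp (β * (W - ΔF)) * Prev (-W))
    (hInt : IntegrableOn Pfwd (Set.Iic Wε))
    (oneMinusε : ℝ)
    (hεdef : oneMinusε = ∫ W in Set.Iic Wε, Pfwd W)
    (hεpos : 0 < oneMinusε) :
    1 / oneMinusε ≥ Real.exp (-(β * (Wε - ΔF)) + (-Real.log (qmax / β))) := by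
  set g : ℝ → ℝ := fun x => qmax * Real.exp (β * (x - ΔF)) with hg
  have hgeq : g = fun x => (qmax * Real.exp (-(β * ΔF))) * Real.exp (β * x) := by
    funext x
    rw [hg]
    rw [mul_assoc, ← Real.exp_add]
    ring_nf
  have hg_int : IntegrableOn g (Set.Iic Wε) := by
    rw [hgeq]
    exact (exp_mul_integrableOn_Iic' hβ Wε).const_mul _
  have hle : ∀ x, Pfwd x ≤ g x := by
    intro x
    rw [hCrooks x]
    calc Real.exp (β * (x - ΔF)) * Prev (-x)
        ≤ Real.exp (β * (x - ΔF)) * qmax :=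
          mul_le_mul_of_nonneg_left (hPr_le x) (Real.exp_pos _).le
      _ = g x := by rw [hg]; ring
  have hval : ∫ x in Set.Iic Wε, g x = (qmax / β) * Real.exp (β * (Wε - ΔF)) := by
    rw [hgeq, MeasureTheory.integral_const_mul, exp_mul_integral_Iic hβ Wε]
    rw [mul_sub, Real.exp_sub, Real.exp_neg]
    field_simp
  have hK : oneMinusε ≤ (qmax / β) * Real.exp (β * (Wε - ΔF)) := by
    rw [hεdef, ← hval]
    exact integral_mono hInt hg_int hle
  have hKpos : 0 < (qmax / β) * Real.exp (β * (Wε - ΔF)) :=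
    mul_pos (div_pos hqmax hβ) (Real.exp_pos _)
  have h1 : 1 / ((qmax / β) * Real.exp (β * (Wε - ΔF))) ≤ 1 / oneMinusε :=
    one_div_le_one_div_of_le hεpos hK
  have h2 : Real.exp (-(β * (Wε - ΔF)) + (-Real.log (qmax / β)))
      = 1 / ((qmax / β) * Real.exp (β * (Wε - ΔF))) := by
    rw [Real.exp_add, Real.exp_neg, Real.exp_neg, Real.exp_log (div_pos hqmax hβ)]
    rw [one_div, mul_inv]
    ring
  rw [ge_iff_le, h2]
  exact h1
end

section
/- Let P_rev be a probability density on ℝ with M := ∫ e^{βW} P_rev(−W) dW finite and positive, β > 0. Define ΔF := (1/β) log M and, for w^δ ∈ ℝ, the truncated estimate (ΔF)_est := (1/β) log(∫_{−∞}^{w^δ} e^{βW} P_rev(−W) dW), assumed well-defined (truncated integral positive). Then (ΔF)_est ≤ ΔF, and moreover ΔF − (ΔF)_est ≥ −(1/β) log(1 − e^{β w^δ}(1−δ)/M), where 1−δ := ∫_{w^δ}^∞ P_rev(−W) dW (assuming e^{β w^δ}(1−δ) < M). -/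
open MeasureTheory Real Set

/-- The truncated estimate underestimates ΔF, and the error is lower-bounded
    via the tail bound. -/
theorem truncated_estimate_error
    (β wδ : ℝ) (hβ : 0 < β)
    (Prev : ℝ → ℝ)
    (hPr_nonneg : ∀ W, 0 ≤ Prev W)
    (hPr_norm : ∫ W, Prev W = 1)
    (hInt : Integrable (fun W => Real.exp (β * W) * Prev (-W)))
    (M : ℝ) (hM : M = ∫ W, Real.exp (β * W) * Prev (-W)) (hMpos : 0 < M)
    (ΔF : ℝ) (hΔF : ΔF = (1 / β) * Real.log M)
    (ΔFest : ℝ)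
    (hest : ΔFest = (1 / β) * Real.log (∫ W in Set.Iic wδ, Real.exp (β * W) * Prev (-W)))
    (htrunc_pos : 0 < ∫ W in Set.Iic wδ, Real.exp (β * W) * Prev (-W))
    (oneMinusδ : ℝ) (hδdef : oneMinusδ = ∫ W in Set.Ici wδ, Prev (-W))
    (htail_lt : Real.exp (β * wδ) * oneMinusδ < M) :
    ΔFest ≤ ΔF ∧
      ΔF - ΔFest ≥ -(1 / β) * Real.log (1 - Real.exp (β * wδ) * oneMinusδ / M) := by
  set f : ℝ → ℝ := fun W => Real.exp (β * W) * Prev (-W) with hf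
  have hf_nonneg : ∀ W, 0 ≤ f W := fun W => mul_nonneg (Real.exp_pos _).le (hPr_nonneg _)
  set T := ∫ W in Set.Iic wδ, f W with hT
  have hT_le_M : T ≤ M := by
    rw [hM]
    exact setIntegral_le_integral hInt (Filter.Eventually.of_forall hf_nonneg)
  have hPrInt : Integrable Prev := by
    by_contra h
    rw [integral_undef h] at hPr_norm
    exact one_ne_zero hPr_norm.symm
  have hPrNegInt : Integrable (fun W => Prev (-W)) := hPrInt.comp_neg
  have hsplit : T + (∫ W in Set.Ioi wδ, f W) = M := by
    rw [hM]; exact intervalIntegral.integral_Iic_add_Ioi hInt.integrableOn hInt.integrableOn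
  have htail : Real.exp (β * wδ) * oneMinusδ ≤ ∫ W in Set.Ioi wδ, f W := by
    have h1 : oneMinusδ = ∫ W in Set.Ioi wδ, Prev (-W) := by
      rw [hδdef, integral_Ici_eq_integral_Ioi]
    rw [h1, ← integral_const_mul]
    apply setIntegral_mono_on
    · exact (hPrNegInt.const_mul _).integrableOn
    · exact hInt.integrableOn
    · exact measurableSet_Ioi
    · intro x hx
      exact mul_le_mul_of_nonneg_right
        (Real.exp_le_exp.mpr (mul_le_mul_of_nonneg_left hx.le hβ.le)) (hPr_nonneg _)
  have hMe_pos : 0 < M - Real.exp (β * wδ) * oneMinusδ := by linarith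
  have hT_le : T ≤ M - Real.exp (β * wδ) * oneMinusδ := by linarith
  have hβinv : 0 ≤ 1 / β := by positivity
  constructor
  · rw [hΔF, hest]
    exact mul_le_mul_of_nonneg_left (Real.log_le_log htrunc_pos hT_le_M) hβinv
  · have h1me : 1 - Real.exp (β * wδ) * oneMinusδ / M
        = (M - Real.exp (β * wδ) * oneMinusδ) / M := by
      field_simp
    have hlog : Real.log ((M - Real.exp (β * wδ) * oneMinusδ) / M)
        = Real.log (M - Real.exp (β * wδ) * oneMinusδ) - Real.log M :=
      Real.log_div (ne_of_gt hMe_pos) (ne_of_gt hMpos)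
    have hlogT : Real.log T ≤ Real.log (M - Real.exp (β * wδ) * oneMinusδ) :=
      Real.log_le_log htrunc_pos hT_le
    rw [hΔF, hest, ge_iff_le, h1me, hlog]
    have : (1 / β) * Real.log M - (1 / β) * Real.log T
        = (1 / β) * (Real.log M - Real.log T) := by ring
    nlinarith [mul_le_mul_of_nonneg_left hlogT hβinv]
end

section
/- Let β > 0, k > 0, α > 0, and define P_fwd(W) := (β/(α Γ(k))) (βW/α)^{k−1} e^{−βW/α} · 1_{W ≥ 0} and P_rev(−W) := (β/(α' Γ(k))) (βW/α')^{k−1} e^{−βW/α'} · 1_{W ≥ 0} where α' := α/(1+α) (the reverse-protocol parameter satisfies |α_rev| = α/(1+α) after sign conventions). Then P_fwd(W)/P_rev(−W) = C e^{βW} for all W > 0, where C is a constant independent of W; consequently Crooks' theorem holds with e^{−β ΔF} = C, i.e., ΔF = (k/β) log(1+α). -/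
open Real

/-- Dilute-gas work distributions satisfy Crooks' theorem with
    ΔF = (k/β) log(1+α). -/
theorem dilute_gas_crooks
    (α β k : ℝ) (hα : 0 < α) (hβ : 0 < β) (hk : 0 < k)
    (α' : ℝ) (hα' : α' = α / (1 + α))
    (Pfwd Prevd : ℝ → ℝ)
    (hPf : ∀ W, Pfwd W =
      (β / (α * Real.Gamma k)) * (β * W / α) ^ (k - 1) * Real.exp (-(β * W / α)))
    (hPr : ∀ W, Prevd W =
      (β / (α' * Real.Gamma k)) * (β * W / α') ^ (k - 1) * Real.exp (-(β * W / α'))) :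
    ∃ C : ℝ, (∀ W : ℝ, 0 < W → Pfwd W = C * Real.exp (β * W) * Prevd W) ∧
      C = Real.exp (-(β * ((k / β) * Real.log (1 + α)))) := by
  refine ⟨Real.exp (-(β * ((k / β) * Real.log (1 + α)))), ?_, rfl⟩
  intro W hW
  have ht : (0:ℝ) < 1 + α := by linarith
  have hΓ : 0 < Real.Gamma k := Real.Gamma_pos_of_pos hk
  have hx : 0 < β * W / α := by positivity
  have hC : Real.exp (-(β * ((k / β) * Real.log (1 + α)))) = (1+α) ^ (-k) := by
    rw [Real.rpow_def_of_pos ht]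
    congr 1
    field_simp
  rw [hPf, hPr, hC, hα']
  have h1 : β * W / (α / (1+α)) = β * W / α * (1+α) := by
    field_simp
  rw [h1, Real.mul_rpow (le_of_lt hx) (le_of_lt ht)]
  have h2 : (1+α)^(-k) * (1+α)^(k-1) = (1+α)⁻¹ := by
    rw [← Real.rpow_add ht]
    have h : -k + (k-1) = -1 := by ring
    rw [h, Real.rpow_neg_one]
  have h3 : Real.exp (β*W) * Real.exp (-(β * W / α * (1+α))) = Real.exp (-(β*W/α)) := by
    rw [← Real.exp_add]
    congr 1
    field_simp
    ring
  have key : (1+α)^(-k) * Real.exp (β * W) *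
      (β / (α / (1+α) * Real.Gamma k) * ((β*W/α)^(k-1) * (1+α)^(k-1)) *
        Real.exp (-(β * W / α * (1+α))))
      = (β / (α * Real.Gamma k) * (1+α) * ((1+α)^(-k) * (1+α)^(k-1)) * (β*W/α)^(k-1)) *
        (Real.exp (β*W) * Real.exp (-(β * W / α * (1+α)))) := by
    field_simp
  rw [key, h2, h3]
  field_simp
end

section
/- Under the hypotheses of Theorem 1 (Crooks' theorem, P_fwd ≤ p_max, β > 0), choosing the threshold w^δ = ⟨W⟩_fwd (the mean forward work, assumed to exist), the expected number of reverse trials satisfies N_δ ≥ (β/p_max) · e^{β(⟨W⟩_fwd − ΔF)}. In particular, if p_max < β then N_δ strictly exceeds e^{β(⟨W⟩_fwd − ΔF)}. -/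
open MeasureTheory Real Set

lemma integral_exp_neg_mul_Ioi (a : ℝ) {b : ℝ} (hb : 0 < b) :
    ∫ x in Set.Ioi a, Real.exp (-b * x) = Real.exp (-b * a) / b := by
  have hderiv : ∀ x ∈ Set.Ici a,
      HasDerivAt (fun x => -(Real.exp (-b * x) / b)) (Real.exp (-b * x)) x := by
    intro x _
    have h1 : HasDerivAt (fun x : ℝ => -b * x) (-b) x := by
      simpa using (hasDerivAt_id x).const_mul (-b)
    have h2 := (h1.exp).div_const b
    have h3 := h2.neg
    exact h3.congr_deriv (by rw [mul_neg, neg_div, neg_neg, mul_div_cancel_right₀ _ hb.ne'])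
  have hint : IntegrableOn (fun x : ℝ => Real.exp (-b * x)) (Set.Ioi a) :=
    exp_neg_integrableOn_Ioi a hb
  have htend : Filter.Tendsto (fun x => -(Real.exp (-b * x) / b)) Filter.atTop (nhds 0) := by
    have hbx : Filter.Tendsto (fun x : ℝ => b * x) Filter.atTop Filter.atTop := by
      simpa using Filter.tendsto_id.const_mul_atTop hb (f := fun x : ℝ => x)
    have h2 : Filter.Tendsto (fun x : ℝ => Real.exp (-(b * x))) Filter.atTop (nhds 0) :=
      Real.tendsto_exp_neg_atTop_nhds_zero.comp hbx
    have h3 : Filter.Tendsto (fun x : ℝ => Real.exp (-b * x)) Filter.atTop (nhds 0) := by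
      simpa [neg_mul] using h2
    simpa using ((h3.div_const b).neg)
  have := MeasureTheory.integral_Ioi_of_hasDerivAt_of_tendsto' hderiv hint htend
  rw [this]; ring

/-- Theorem 1 with the threshold chosen as the mean forward work:
    the bound tightens the rough estimate e^{β(⟨W⟩ - ΔF)} when pmax < β. -/
theorem expected_trials_bound_at_mean_work
    (β ΔF pmax : ℝ) (hβ : 0 < β) (hpmax : 0 < pmax)
    (Pfwd Prev : ℝ → ℝ)
    (hPf_nonneg : ∀ W, 0 ≤ Pfwd W)
    (hPr_nonneg : ∀ W, 0 ≤ Prev W)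
    (hPf_norm : ∫ W, Pfwd W = 1)
    (hPr_norm : ∫ W, Prev W = 1)
    (hPf_le : ∀ W, Pfwd W ≤ pmax)
    (hCrooks : ∀ W, Pfwd W = Real.exp (β * (W - ΔF)) * Prev (-W))
    (hIntMean : Integrable (fun W => W * Pfwd W))
    (meanW : ℝ) (hmean : meanW = ∫ W, W * Pfwd W)
    (hInt : IntegrableOn (fun W => Prev (-W)) (Set.Ici meanW))
    (oneMinusδ : ℝ)
    (hδdef : oneMinusδ = ∫ W in Set.Ici meanW, Prev (-W))
    (hδpos : 0 < oneMinusδ) :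
    1 / oneMinusδ ≥ (β / pmax) * Real.exp (β * (meanW - ΔF)) ∧
      (pmax < β → 1 / oneMinusδ > Real.exp (β * (meanW - ΔF))) := by
  -- pointwise bound: Prev (-W) = Pfwd W * exp (-β (W - ΔF)) ≤ pmax * exp (-β W) * exp (β ΔF)
  have hpt : ∀ W, Prev (-W) ≤ pmax * Real.exp (-β * (W - ΔF)) := by
    intro W
    have h := hCrooks W
    have hexp : 0 < Real.exp (β * (W - ΔF)) := Real.exp_pos _
    have h1 : Real.exp (β * (W - ΔF)) * Real.exp (-β * (W - ΔF)) = 1 := by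
      rw [← Real.exp_add, show β * (W - ΔF) + -β * (W - ΔF) = 0 by ring, Real.exp_zero]
    have : Prev (-W) = Pfwd W * Real.exp (-β * (W - ΔF)) := by
      rw [h, show Real.exp (β * (W - ΔF)) * Prev (-W) * Real.exp (-β * (W - ΔF)) =
        Prev (-W) * (Real.exp (β * (W - ΔF)) * Real.exp (-β * (W - ΔF))) from by ring,
        h1, mul_one]
    rw [this]
    exact mul_le_mul_of_nonneg_right (hPf_le W) (Real.exp_pos _).le
  -- integral bound
  have hIciIoi : (∫ W in Set.Ici meanW, Prev (-W)) = ∫ W in Set.Ioi meanW, Prev (-W) :=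
    MeasureTheory.integral_Ici_eq_integral_Ioi
  have hintmaj : IntegrableOn (fun W : ℝ => pmax * Real.exp (-β * (W - ΔF)))
      (Set.Ioi meanW) := by
    have : IntegrableOn (fun W : ℝ => Real.exp (-β * W)) (Set.Ioi meanW) :=
      exp_neg_integrableOn_Ioi meanW hβ
    have hfun : (fun W : ℝ => pmax * Real.exp (-β * (W - ΔF))) =
        fun W : ℝ => (pmax * Real.exp (β * ΔF)) * Real.exp (-β * W) := by
      funext W
      rw [mul_assoc, ← Real.exp_add, show β * ΔF + -β * W = -β * (W - ΔF) by ring]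
    rw [hfun]
    exact this.const_mul _
  have hle : oneMinusδ ≤ pmax * (Real.exp (-β * (meanW - ΔF)) / β) := by
    rw [hδdef, hIciIoi]
    have h1 : (∫ W in Set.Ioi meanW, Prev (-W)) ≤
        ∫ W in Set.Ioi meanW, pmax * Real.exp (-β * (W - ΔF)) := by
      apply MeasureTheory.setIntegral_mono_on
        (hInt.mono_set Set.Ioi_subset_Ici_self) hintmaj measurableSet_Ioi
      intro x _; exact hpt x
    have h2 : (∫ W in Set.Ioi meanW, pmax * Real.exp (-β * (W - ΔF))) =
        pmax * (Real.exp (-β * (meanW - ΔF)) / β) := by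
      have heq : ∀ W : ℝ, pmax * Real.exp (-β * (W - ΔF)) =
          (pmax * Real.exp (β * ΔF)) * Real.exp (-β * W) := by
        intro W
        rw [mul_assoc, ← Real.exp_add, show β * ΔF + -β * W = -β * (W - ΔF) by ring]
      calc (∫ W in Set.Ioi meanW, pmax * Real.exp (-β * (W - ΔF)))
          = ∫ W in Set.Ioi meanW, (pmax * Real.exp (β * ΔF)) * Real.exp (-β * W) := by
            simp_rw [heq]
        _ = (pmax * Real.exp (β * ΔF)) * ∫ W in Set.Ioi meanW, Real.exp (-β * W) := by
            rw [MeasureTheory.integral_const_mul]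
        _ = (pmax * Real.exp (β * ΔF)) * (Real.exp (-β * meanW) / β) := by
            rw [integral_exp_neg_mul_Ioi meanW hβ]
        _ = pmax * (Real.exp (-β * (meanW - ΔF)) / β) := by
            rw [show -β * (meanW - ΔF) = β * ΔF + -β * meanW by ring, Real.exp_add]
            ring
    linarith [h1, h2.le, h2.ge]
  -- conclude
  have hkey : 1 / oneMinusδ ≥ (β / pmax) * Real.exp (β * (meanW - ΔF)) := by
    have hpos2 : 0 < pmax * (Real.exp (-β * (meanW - ΔF)) / β) := by positivity
    have h3 : 1 / (pmax * (Real.exp (-β * (meanW - ΔF)) / β)) ≤ 1 / oneMinusδ :=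
      one_div_le_one_div_of_le hδpos hle
    have h4 : 1 / (pmax * (Real.exp (-β * (meanW - ΔF)) / β)) =
        (β / pmax) * Real.exp (β * (meanW - ΔF)) := by
      rw [show -β * (meanW - ΔF) = -(β * (meanW - ΔF)) by ring, Real.exp_neg]
      field_simp
    rw [← h4]; exact h3
  refine ⟨hkey, fun hlt => ?_⟩
  have : (1 : ℝ) < β / pmax := (one_lt_div hpmax).mpr hlt
  have hexp := Real.exp_pos (β * (meanW - ΔF))
  calc 1 / oneMinusδ ≥ (β / pmax) * Real.exp (β * (meanW - ΔF)) := hkey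
    _ > 1 * Real.exp (β * (meanW - ΔF)) := by
        exact (mul_lt_mul_of_pos_right this hexp)
    _ = Real.exp (β * (meanW - ΔF)) := one_mul _
end
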